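/- Let U be a random vector taking values in the nonnegative orthant of ℝ^n with finite, positive definite covariance matrix, Y = 𝒫(U), and suppose E[U | Y = y] = H y + c for every y ∈ ℤ^n_{≥0}, for some matrix H ∈ ℝ^{n×n} and vector c ∈ ℝ^n. Then the conditional covariance matrix of U given Y = 0 satisfies [Var(U | Y = 0)]_{ij} = c_i h_ji for all i, j ∈ [1:n] (that is, Var(U | Y = 0) equals the Hadamard product (c 1ᵀ) ⊙ Hᵀ), and consequently H is an invertible matrix. -/

import Mathlib

open MeasureTheory ProbabilityTheory

noncomputable section

/-- The probability mass function of the Poisson distribution with (real) mean `m`,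
evaluated at `k` (with the convention `0 ^ 0 = 1`). -/
def poissonP (m : ℝ) (k : ℕ) : ℝ := m ^ k * Real.exp (-m) / (Nat.factorial k)

/-- `Y = 𝒫(U)` : `U` takes values in the nonnegative orthant and, conditionally on `U = u`,
the coordinates of `Y` are independent with `Y i` Poisson distributed with mean `u i`. -/
def IsPoissonObs {Ω : Type} [MeasurableSpace Ω] (μ : Measure Ω) {n : ℕ}
    (U : Ω → Fin n → ℝ) (Y : Ω → Fin n → ℕ) : Prop :=
  Measurable U ∧ Measurable Y ∧ (∀ ω i, 0 ≤ U ω i) ∧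
    ∀ (y : Fin n → ℕ) (B : Set (Fin n → ℝ)), MeasurableSet B →
      (μ {ω | Y ω = y ∧ U ω ∈ B}).toReal
        = ∫ ω in {ω | U ω ∈ B}, ∏ i, poissonP (U ω i) (y i) ∂μ

/-- Conditional expectation of `f` given the event `A`. -/
def condExpEvent {Ω : Type} [MeasurableSpace Ω] (μ : Measure Ω) (A : Set Ω)
    (f : Ω → ℝ) : ℝ :=
  (∫ ω in A, f ω ∂μ) / (μ A).toReal

/-- The covariance matrix of a random vector `U`. -/
def covMatrix {Ω : Type} [MeasurableSpace Ω] (μ : Measure Ω) {n : ℕ}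
    (U : Ω → Fin n → ℝ) : Matrix (Fin n) (Fin n) ℝ :=
  Matrix.of fun i j =>
    ∫ ω, (U ω i - ∫ ω', U ω' i ∂μ) * (U ω j - ∫ ω', U ω' j ∂μ) ∂μ

/- ==================== auxiliary lemmas ==================== -/

lemma myint2 {Ω : Type} [MeasurableSpace Ω] {μ : Measure Ω} {f g : Ω → ℝ}
    (hf : MemLp f 2 μ) (hg : MemLp g 2 μ) : Integrable (fun ω => f ω * g ω) μ := by
  have h : MemLp (fun ω => g ω • f ω) 1 μ := hf.smul (𝕜 := ℝ) hg
    (hpqr := ⟨by rw [inv_one]; exact ENNReal.inv_two_add_inv_two⟩)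
  exact (memLp_one_iff_integrable.1 h).congr
    (by filter_upwards with ω; simp [smul_eq_mul, mul_comm])

lemma poissonP_meas (k : ℕ) : Measurable (fun m : ℝ => poissonP m k) := by
  unfold poissonP
  exact ((measurable_id.pow_const k).mul (Real.measurable_exp.comp measurable_neg)).div_const _

lemma poissonP_nonneg {m : ℝ} (hm : 0 ≤ m) (k : ℕ) : 0 ≤ poissonP m k := by
  unfold poissonP
  positivity

lemma poissonP_zero (m : ℝ) : poissonP m 0 = Real.exp (-m) := by simp [poissonP]

lemma poissonP_one (m : ℝ) : poissonP m 1 = m * Real.exp (-m) := by simp [poissonP]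

lemma poissonP_le_one {m : ℝ} (hm : 0 ≤ m) {k : ℕ} (hk : k ≤ 1) : poissonP m k ≤ 1 := by
  rcases Nat.le_one_iff_eq_zero_or_eq_one.mp hk with h | h <;> subst h
  · rw [poissonP_zero, Real.exp_le_one_iff]; linarith
  · rw [poissonP_one]
    have h1 : m ≤ Real.exp m := by
      have := Real.add_one_le_exp m; linarith
    calc m * Real.exp (-m) ≤ Real.exp m * Real.exp (-m) :=
          mul_le_mul_of_nonneg_right h1 (Real.exp_nonneg _)
      _ = 1 := by rw [← Real.exp_add]; simp

lemma prod_pois_zero {n : ℕ} (u : Fin n → ℝ) :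
    ∏ i, poissonP (u i) ((0 : Fin n → ℕ) i) = ∏ i, Real.exp (-(u i)) := by
  simp [poissonP_zero]

lemma prod_pois_single {n : ℕ} (j : Fin n) (u : Fin n → ℝ) :
    ∏ i, poissonP (u i) (if i = j then 1 else 0) = u j * ∏ i, Real.exp (-(u i)) := by
  have h : ∀ i : Fin n, poissonP (u i) (if i = j then 1 else 0)
      = (if i = j then u i else 1) * Real.exp (-(u i)) := by
    intro i; by_cases h : i = j <;> simp [h, poissonP_zero, poissonP_one]
  simp_rw [h]
  rw [Finset.prod_mul_distrib, Finset.prod_ite_eq' Finset.univ j (fun i => u i)]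
  simp

/-- Core transfer lemma: integrating a function of `U` over the event `{Y = y}`. -/
lemma transfer {Ω : Type} [MeasurableSpace Ω] {μ : Measure Ω} [IsProbabilityMeasure μ]
    {n : ℕ} {U : Ω → Fin n → ℝ} {Y : Ω → Fin n → ℕ}
    (hPo : IsPoissonObs μ U Y) {y : Fin n → ℕ} (hy : ∀ i, y i ≤ 1)
    (g : (Fin n → ℝ) → ℝ) (hg : Measurable g) :
    ∫ ω in {ω | Y ω = y}, g (U ω) ∂μ
      = ∫ ω, g (U ω) * ∏ i, poissonP (U ω i) (y i) ∂μ := by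
  obtain ⟨hU, hY, hpos, hlaw⟩ := hPo
  set q : (Fin n → ℝ) → ℝ := fun u => ∏ i, poissonP (u i) (y i) with hqdef
  have hqm : Measurable q :=
    Finset.measurable_prod _ (fun i _ => (poissonP_meas (y i)).comp (measurable_pi_apply i))
  have hq0 : ∀ ω, 0 ≤ q (U ω) := fun ω =>
    Finset.prod_nonneg fun i _ => poissonP_nonneg (hpos ω i) _
  have hq1 : ∀ ω, q (U ω) ≤ 1 := fun ω =>
    Finset.prod_le_one (fun i _ => poissonP_nonneg (hpos ω i) _)
      (fun i _ => poissonP_le_one (hpos ω i) (hy i))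
  have hqint : Integrable (fun ω => q (U ω)) μ := by
    refine (integrable_const (1:ℝ)).mono' ((hqm.comp hU).aestronglyMeasurable) ?_
    filter_upwards with ω
    rw [Real.norm_eq_abs, abs_of_nonneg (hq0 ω)]; exact hq1 ω
  have hmeq : Measure.map U (μ.restrict {ω | Y ω = y})
      = (Measure.map U μ).withDensity (fun u => ENNReal.ofReal (q u)) := by
    ext B hB
    rw [Measure.map_apply hU hB, Measure.restrict_apply (hU hB),
      withDensity_apply _ hB, setLIntegral_map hB hqm.ennreal_ofReal hU,
      ← ofReal_integral_eq_lintegral_ofReal hqint.integrableOn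
        (ae_of_all _ fun ω => hq0 ω)]
    have h2 := hlaw y B hB
    have hset : {ω | Y ω = y ∧ U ω ∈ B} = U ⁻¹' B ∩ {ω | Y ω = y} := by
      ext ω; exact ⟨fun h => ⟨h.2, h.1⟩, fun h => ⟨h.2, h.1⟩⟩
    rw [hset] at h2
    have h3 : (∫ ω in {ω | U ω ∈ B}, ∏ i, poissonP (U ω i) (y i) ∂μ)
        = ∫ x in U ⁻¹' B, q (U x) ∂μ := rfl
    rw [h3] at h2
    rw [← h2, ENNReal.ofReal_toReal (measure_ne_top μ _)]
  have hsm : Measurable fun u : Fin n → ℝ => (q u).toNNReal • g u :=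
    (hqm.real_toNNReal.coe_nnreal_real.smul hg)
  calc ∫ ω in {ω | Y ω = y}, g (U ω) ∂μ
      = ∫ u, g u ∂(Measure.map U (μ.restrict {ω | Y ω = y})) :=
        (integral_map hU.aemeasurable hg.aestronglyMeasurable).symm
    _ = ∫ u, g u ∂((Measure.map U μ).withDensity (fun u => ENNReal.ofReal (q u))) := by
        rw [hmeq]
    _ = ∫ u, (q u).toNNReal • g u ∂(Measure.map U μ) := by
        exact integral_withDensity_eq_integral_smul hqm.real_toNNReal g
    _ = ∫ ω, (q (U ω)).toNNReal • g (U ω) ∂μ :=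
        integral_map hU.aemeasurable hsm.aestronglyMeasurable
    _ = ∫ ω, g (U ω) * q (U ω) ∂μ := by
        refine integral_congr_ae (ae_of_all _ fun ω => ?_)
        show (q (U ω)).toNNReal • g (U ω) = g (U ω) * q (U ω)
        rw [NNReal.smul_def, Real.coe_toNNReal _ (hq0 ω), smul_eq_mul, mul_comm]

lemma measure_eq {Ω : Type} [MeasurableSpace Ω] {μ : Measure Ω} [IsProbabilityMeasure μ]
    {n : ℕ} {U : Ω → Fin n → ℝ} {Y : Ω → Fin n → ℕ}
    (hPo : IsPoissonObs μ U Y) (y : Fin n → ℕ) :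
    (μ {ω | Y ω = y}).toReal = ∫ ω, ∏ i, poissonP (U ω i) (y i) ∂μ := by
  have h := hPo.2.2.2 y Set.univ MeasurableSet.univ
  simpa using h

/-- Expansion of the second moment of a linear combination. -/
lemma expand_sq {Ω : Type} [MeasurableSpace Ω] (μ : Measure Ω) {n : ℕ} (f : Fin n → Ω → ℝ)
    (hint : ∀ i j, Integrable (fun ω => f i ω * f j ω) μ) (v : Fin n → ℝ) :
    ∫ ω, (∑ i, v i * f i ω)^2 ∂μ
      = ∑ i, ∑ j, (v i * v j) * ∫ ω, f i ω * f j ω ∂μ := by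
  have h1 : ∀ ω, (∑ i, v i * f i ω)^2 = ∑ i, ∑ j, (v i * v j) * (f i ω * f j ω) := by
    intro ω
    rw [sq, Finset.sum_mul_sum]
    exact Finset.sum_congr rfl fun i _ => Finset.sum_congr rfl fun j _ => by ring
  simp_rw [h1]
  rw [integral_finset_sum _ (fun i _ =>
    integrable_finset_sum _ (fun j _ => ((hint i j).const_mul _)))]
  refine Finset.sum_congr rfl fun i _ => ?_
  rw [integral_finset_sum _ (fun j _ => ((hint i j).const_mul _))]
  exact Finset.sum_congr rfl fun j _ => integral_const_mul _ _

/-- if `U` is nondegenerate, `Y = 𝒫(U)` and `E[U | Y = y] = H y + c`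
for all `y`, then `[Var(U | Y = 0)]_{ij} = c_i h_{ji}` (i.e. `Var(U|Y=0) = (c 1ᵀ) ⊙ Hᵀ`),
and consequently `H` is invertible. -/
theorem stmt6 {Ω : Type} [MeasurableSpace Ω] (μ : Measure Ω) [IsProbabilityMeasure μ]
    {n : ℕ} (U : Ω → Fin n → ℝ) (Y : Ω → Fin n → ℕ)
    (hPo : IsPoissonObs μ U Y)
    (hmom : ∀ i, MemLp (fun ω => U ω i) 2 μ)
    (hcov : (covMatrix μ U).PosDef)
    (H : Matrix (Fin n) (Fin n) ℝ) (c : Fin n → ℝ)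
    (hlin : ∀ y : Fin n → ℕ, μ {ω | Y ω = y} ≠ 0 → ∀ i,
      condExpEvent μ {ω | Y ω = y} (fun ω => U ω i) = ∑ j, H i j * (y j : ℝ) + c i) :
    (∀ i j : Fin n,
        condExpEvent μ {ω | Y ω = (0 : Fin n → ℕ)} (fun ω => U ω i * U ω j)
            - condExpEvent μ {ω | Y ω = (0 : Fin n → ℕ)} (fun ω => U ω i)
              * condExpEvent μ {ω | Y ω = (0 : Fin n → ℕ)} (fun ω => U ω j)
          = c i * H j i)
      ∧ IsUnit H := by
  have hU := hPo.1
  have hpos := hPo.2.2.1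
  set E0 : Set Ω := {ω | Y ω = (0 : Fin n → ℕ)} with hE0def
  set p0 : ℝ := (μ E0).toReal with hp0def
  set eI : Fin n → (Fin n → ℕ) := fun j k => if k = j then 1 else 0 with heIdef
  have hy0 : ∀ i, (0 : Fin n → ℕ) i ≤ 1 := fun i => by simp
  have hyI : ∀ j i, eI j i ≤ 1 := fun j i => by
    simp only [heIdef]; split <;> omega
  have hUi_meas : ∀ i, Measurable fun ω => U ω i :=
    fun i => (measurable_pi_apply i).comp hU
  have hUi_int : ∀ i, Integrable (fun ω => U ω i) μ :=
    fun i => (hmom i).integrable one_le_two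
  have hUij_int : ∀ i j, Integrable (fun ω => U ω i * U ω j) μ :=
    fun i j => myint2 (hmom i) (hmom j)
  -- p0 as an integral, and positivity
  have hp0 : p0 = ∫ ω, ∏ i, Real.exp (-(U ω i)) ∂μ := by
    rw [hp0def, hE0def, measure_eq hPo 0]
    exact integral_congr_ae (ae_of_all _ fun ω => prod_pois_zero (U ω))
  have hP0int : Integrable (fun ω => ∏ i, Real.exp (-(U ω i))) μ := by
    refine (integrable_const (1:ℝ)).mono'
      ((Finset.measurable_prod _ fun i _ =>
        (Real.measurable_exp.comp ((hUi_meas i).neg))).aestronglyMeasurable) ?_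
    filter_upwards with ω
    rw [Real.norm_eq_abs, abs_of_nonneg (Finset.prod_nonneg fun i _ => Real.exp_nonneg _)]
    exact Finset.prod_le_one (fun i _ => Real.exp_nonneg _)
      (fun i _ => Real.exp_le_one_iff.mpr (by linarith [hpos ω i]))
  have hp0ne : p0 ≠ 0 := by
    intro h
    rw [h] at hp0
    have hz := (integral_eq_zero_iff_of_nonneg
      (fun ω => Finset.prod_nonneg fun i _ => Real.exp_nonneg _) hP0int).1 hp0.symm
    have hne : (MeasureTheory.ae μ).NeBot := ae_neBot.mpr (IsProbabilityMeasure.ne_zero μ)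
    obtain ⟨ω, hω⟩ := hz.exists
    have : (0:ℝ) < ∏ i, Real.exp (-(U ω i)) :=
      Finset.prod_pos fun i _ => Real.exp_pos _
    rw [Pi.zero_apply] at hω
    linarith [this, hω.le]
  have hE0ne : μ E0 ≠ 0 := fun h => hp0ne (by rw [hp0def, h, ENNReal.toReal_zero])
  have hp0pos : 0 < p0 := lt_of_le_of_ne ENNReal.toReal_nonneg (Ne.symm hp0ne)
  -- E[U_i 1_{E0}] = c i * p0
  have hc0 : ∀ i, ∫ ω in E0, U ω i ∂μ = c i * p0 := by
    intro i
    have h := hlin 0 hE0ne i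
    rw [condExpEvent] at h
    rw [div_eq_iff hp0ne] at h
    rw [h]
    simp
  -- E[U_i 1_{E0}] = P(Y = e_i)
  have key1 : ∀ i, ∫ ω in E0, U ω i ∂μ = (μ {ω | Y ω = eI i}).toReal := by
    intro i
    rw [hE0def, transfer hPo hy0 (fun u => u i) (measurable_pi_apply i),
      measure_eq hPo (eI i)]
    have hfun : (fun ω => U ω i * ∏ k, poissonP (U ω k) ((0 : Fin n → ℕ) k))
        = fun ω => ∏ k, poissonP (U ω k) (eI i k) := by
      funext ω
      rw [prod_pois_zero (U ω),
        show (∏ k, poissonP (U ω k) (eI i k))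
          = ∏ k, poissonP (U ω k) (if k = i then 1 else 0) from rfl,
        prod_pois_single i (U ω)]
    exact congrArg (fun f => ∫ ω, f ω ∂μ) hfun
  have hpe : ∀ i, (μ {ω | Y ω = eI i}).toReal = c i * p0 := by
    intro i; rw [← key1 i, hc0 i]
  -- E[U_i 1_{Y = e_j}] = (H i j + c i) * (c j * p0)
  have keyA : ∀ i j, ∫ ω in {ω | Y ω = eI j}, U ω i ∂μ = (H i j + c i) * (c j * p0) := by
    intro i j
    by_cases h : μ {ω | Y ω = eI j} = 0
    · rw [Measure.restrict_eq_zero.mpr h, integral_zero_measure]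
      have : c j * p0 = 0 := by rw [← hpe j, h, ENNReal.toReal_zero]
      rw [this, mul_zero]
    · have h2 := hlin (eI j) h i
      rw [condExpEvent] at h2
      have hne : (μ {ω | Y ω = eI j}).toReal ≠ 0 :=
        ENNReal.toReal_ne_zero.mpr ⟨h, measure_ne_top μ _⟩
      rw [div_eq_iff hne] at h2
      have hsum : (∑ k, H i k * ((eI j k : ℕ) : ℝ)) = H i j := by
        rw [Finset.sum_eq_single j]
        · simp [heIdef]
        · intro k _ hk; simp [heIdef, hk]
        · intro hj; exact absurd (Finset.mem_univ j) hj
      rw [h2, hsum, hpe j]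
  -- E[U_i U_j 1_{E0}] = (H i j + c i) * (c j * p0)
  have keyB : ∀ i j, ∫ ω in E0, U ω i * U ω j ∂μ = (H i j + c i) * (c j * p0) := by
    intro i j
    rw [hE0def, transfer hPo hy0 (fun u => u i * u j)
      ((measurable_pi_apply i).mul (measurable_pi_apply j))]
    rw [← keyA i j, transfer hPo (hyI j) (fun u => u i) (measurable_pi_apply i)]
    have hfun : (fun ω => U ω i * U ω j * ∏ k, poissonP (U ω k) ((0 : Fin n → ℕ) k))
        = fun ω => U ω i * ∏ k, poissonP (U ω k) (eI j k) := by
      funext ω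
      rw [prod_pois_zero (U ω),
        show (∏ k, poissonP (U ω k) (eI j k))
          = ∏ k, poissonP (U ω k) (if k = j then 1 else 0) from rfl,
        prod_pois_single j (U ω)]
      ring
    exact congrArg (fun f => ∫ ω, f ω ∂μ) hfun
  -- Part 1: the variance formula
  have varform : ∀ i j,
      condExpEvent μ E0 (fun ω => U ω i * U ω j)
        - condExpEvent μ E0 (fun ω => U ω i) * condExpEvent μ E0 (fun ω => U ω j)
      = H i j * c j := by
    intro i j
    rw [condExpEvent, condExpEvent, condExpEvent, keyB i j, hc0 i, hc0 j, ← hp0def]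
    field_simp
    ring
  have part1 : ∀ i j : Fin n,
      condExpEvent μ E0 (fun ω => U ω i * U ω j)
        - condExpEvent μ E0 (fun ω => U ω i) * condExpEvent μ E0 (fun ω => U ω j)
      = c i * H j i := by
    intro i j
    have hsym : (fun ω => U ω i * U ω j) = fun ω => U ω j * U ω i :=
      funext fun ω => mul_comm _ _
    rw [hsym, mul_comm (condExpEvent μ E0 fun ω => U ω i) _, varform j i, mul_comm]
  refine ⟨part1, ?_⟩
  -- Part 2: invertibility
  rw [Matrix.isUnit_iff_isUnit_det, isUnit_iff_ne_zero]
  intro hdet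
  have hdetM : (H * Matrix.diagonal c).det = 0 := by
    rw [Matrix.det_mul, hdet, zero_mul]
  obtain ⟨v, hv, hMv⟩ := Matrix.exists_mulVec_eq_zero_iff.mpr hdetM
  -- the quadratic form of M := H * diag c at v vanishes
  have hQ : ∑ i, ∑ j, (v i * v j) * (H i j * c j) = 0 := by
    have hrow : ∀ i, ∑ j, (v i * v j) * (H i j * c j)
        = v i * ((H * Matrix.diagonal c).mulVec v i) := by
      intro i
      rw [Matrix.mulVec, dotProduct, Finset.mul_sum]
      exact Finset.sum_congr rfl fun j _ => by rw [Matrix.mul_diagonal]; ring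
    simp only [hrow, hMv, Pi.zero_apply, mul_zero, Finset.sum_const_zero]
  -- conditional second moment of T := ∑ v i (U i - c i) given Y = 0 vanishes
  have hint2 : ∀ i j, Integrable
      (fun ω => (U ω i - c i) * (U ω j - c j)) (μ.restrict E0) :=
    fun i j => (myint2 ((hmom i).sub (memLp_const (c i)))
      ((hmom j).sub (memLp_const (c j)))).integrableOn
  have entry : ∀ i j, ∫ ω in E0, (U ω i - c i) * (U ω j - c j) ∂μ
      = (H i j * c j) * p0 := by
    intro i j
    have e1 : (fun ω => (U ω i - c i) * (U ω j - c j))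
        = fun ω => U ω i * U ω j - c i * U ω j - c j * U ω i + c i * c j :=
      funext fun ω => by ring
    rw [e1]
    have i2 : Integrable (fun ω => c i * U ω j) (μ.restrict E0) :=
      ((hUi_int j).const_mul (c i)).integrableOn
    have i3 : Integrable (fun ω => c j * U ω i) (μ.restrict E0) :=
      ((hUi_int i).const_mul (c j)).integrableOn
    have i12 : Integrable (fun ω => U ω i * U ω j - c i * U ω j) (μ.restrict E0) :=
      (hUij_int i j).integrableOn.sub i2
    have i123 : Integrable (fun ω => U ω i * U ω j - c i * U ω j - c j * U ω i)
        (μ.restrict E0) := i12.sub i3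
    rw [integral_add i123 (integrable_const _),
      integral_sub i12 i3,
      integral_sub (hUij_int i j).integrableOn i2,
      integral_const_mul, integral_const_mul, keyB i j, hc0 i, hc0 j, setIntegral_const,
      smul_eq_mul, measureReal_def, ← hp0def]
    ring
  have hZ : ∫ ω in E0, (∑ i, v i * (U ω i - c i))^2 ∂μ = 0 := by
    rw [show (∫ ω in E0, (∑ i, v i * (U ω i - c i))^2 ∂μ)
        = ∫ ω, (∑ i, v i * ((fun i ω => U ω i - c i) i ω))^2 ∂(μ.restrict E0) from rfl]
    rw [expand_sq (μ.restrict E0) (fun i ω => U ω i - c i) hint2 v]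
    have : ∀ i j : Fin n, (∫ ω, (U ω i - c i) * (U ω j - c j) ∂(μ.restrict E0))
        = (H i j * c j) * p0 := entry
    simp_rw [this]
    calc ∑ i, ∑ j, (v i * v j) * (H i j * c j * p0)
        = (∑ i, ∑ j, (v i * v j) * (H i j * c j)) * p0 := by
          rw [Finset.sum_mul]
          refine Finset.sum_congr rfl fun i _ => ?_
          rw [Finset.sum_mul]
          exact Finset.sum_congr rfl fun j _ => by ring
      _ = 0 := by rw [hQ, zero_mul]
  -- transfer to an unconditional statement
  have hTm : Measurable fun u : Fin n → ℝ => (∑ i, v i * (u i - c i))^2 :=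
    (Finset.measurable_sum _ fun i _ =>
      (Measurable.const_mul (f := fun u : Fin n → ℝ => u i - c i)
        ((measurable_pi_apply i).sub measurable_const) (v i))).pow_const 2
  have hZ2 : ∫ ω, (∑ i, v i * (U ω i - c i))^2
      * ∏ k, poissonP (U ω k) ((0 : Fin n → ℕ) k) ∂μ = 0 := by
    rw [← transfer hPo hy0 (fun u => (∑ i, v i * (u i - c i))^2) hTm]
    exact hZ
  have hTmem : MemLp (fun ω => ∑ i, v i * (U ω i - c i)) 2 μ :=
    memLp_finset_sum _ fun i _ => (((hmom i).sub (memLp_const (c i))).const_mul (v i))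
  have hT2int : Integrable (fun ω => (∑ i, v i * (U ω i - c i))^2) μ := by
    have h := myint2 hTmem hTmem
    exact h.congr (ae_of_all _ fun ω => (sq _).symm)
  have hZint : Integrable (fun ω => (∑ i, v i * (U ω i - c i))^2
      * ∏ k, poissonP (U ω k) ((0 : Fin n → ℕ) k)) μ := by
    have hb : Integrable (fun ω => (∏ k, poissonP (U ω k) ((0 : Fin n → ℕ) k))
        * (∑ i, v i * (U ω i - c i))^2) μ := by
      refine hT2int.bdd_mul ((Finset.measurable_prod _ fun k _ =>
        (poissonP_meas _).comp (hUi_meas k)).aestronglyMeasurable) (c := 1) (ae_of_all _ fun ω => ?_)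
      rw [Real.norm_eq_abs,
        abs_of_nonneg (Finset.prod_nonneg fun k _ => poissonP_nonneg (hpos ω k) _)]
      exact Finset.prod_le_one (fun k _ => poissonP_nonneg (hpos ω k) _)
        (fun k _ => poissonP_le_one (hpos ω k) (hy0 k))
    exact hb.congr (ae_of_all _ fun ω => mul_comm _ _)
  have haez := (integral_eq_zero_iff_of_nonneg (fun ω =>
    mul_nonneg (sq_nonneg _) (Finset.prod_nonneg fun k _ => poissonP_nonneg (hpos ω k) _))
    hZint).1 hZ2
  have hae : ∀ᵐ ω ∂μ, ∑ i, v i * (U ω i - c i) = 0 := by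
    filter_upwards [haez] with ω hω
    rw [Pi.zero_apply] at hω
    have hP : 0 < ∏ k, poissonP (U ω k) ((0 : Fin n → ℕ) k) := by
      rw [prod_pois_zero (U ω)]
      exact Finset.prod_pos fun k _ => Real.exp_pos _
    have h2 : (∑ i, v i * (U ω i - c i))^2 = 0 := by
      rcases mul_eq_zero.mp hω with h | h
      · exact h
      · exact absurd h (ne_of_gt hP)
    exact pow_eq_zero_iff (by norm_num) |>.mp h2
  -- ∑ v i (b i - c i) = 0 where b i = E U_i
  have hsummand : ∀ i : Fin n, Integrable (fun ω => v i * (U ω i - c i)) μ := by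
    intro i
    have h1 : Integrable (fun ω => U ω i - c i) μ := (hUi_int i).sub (integrable_const _)
    exact h1.const_mul _
  have hT0 : ∫ ω, ∑ i, v i * (U ω i - c i) ∂μ = 0 := by
    rw [integral_congr_ae hae]; simp
  have hbc : ∑ i, v i * ((∫ ω, U ω i ∂μ) - c i) = 0 := by
    rw [← hT0, integral_finset_sum _ (fun i _ => hsummand i)]
    refine (Finset.sum_congr rfl fun i _ => ?_).symm
    rw [integral_const_mul, integral_sub (hUi_int i) (integrable_const _), integral_const]
    simp
  -- contradiction with positive definiteness of the covariance matrix
  have hcv := (Matrix.posDef_iff_dotProduct_mulVec.mp hcov).2 hv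
  have hint3 : ∀ i j, Integrable (fun ω =>
      (U ω i - ∫ ω', U ω' i ∂μ) * (U ω j - ∫ ω', U ω' j ∂μ)) μ :=
    fun i j => myint2 ((hmom i).sub (memLp_const _)) ((hmom j).sub (memLp_const _))
  have hform : dotProduct (star v) ((covMatrix μ U).mulVec v)
      = ∫ ω, (∑ i, v i * (U ω i - ∫ ω', U ω' i ∂μ))^2 ∂μ := by
    rw [expand_sq μ (fun i ω => U ω i - ∫ ω', U ω' i ∂μ) hint3 v]
    rw [dotProduct]
    refine Finset.sum_congr rfl fun i _ => ?_
    rw [Matrix.mulVec, dotProduct, Finset.mul_sum, star_trivial]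
    refine Finset.sum_congr rfl fun j _ => ?_
    rw [show covMatrix μ U i j
      = ∫ ω, (U ω i - ∫ ω', U ω' i ∂μ) * (U ω j - ∫ ω', U ω' j ∂μ) ∂μ from rfl]
    ring
  have hzero : dotProduct (star v) ((covMatrix μ U).mulVec v) = 0 := by
    rw [hform]
    have hae2 : (fun ω => (∑ i, v i * (U ω i - ∫ ω', U ω' i ∂μ))^2) =ᵐ[μ] 0 := by
      filter_upwards [hae] with ω hω
      have hsplit : ∑ i, v i * (U ω i - ∫ ω', U ω' i ∂μ)
          = (∑ i, v i * (U ω i - c i)) - ∑ i, v i * ((∫ ω', U ω' i ∂μ) - c i) := by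
        rw [← Finset.sum_sub_distrib]
        exact Finset.sum_congr rfl fun i _ => by ring
      rw [Pi.zero_apply, hsplit, hω, hbc]
      norm_num
    rw [integral_congr_ae hae2]
    simp
  rw [hzero] at hcv
  exact lt_irrefl 0 hcv
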